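/- Let a, c > 0 and b ∈ ℝ, and set β := b/√(ac). For all n, m ∈ ℕ, the operator h p = (1/2)·(x·∂x p + y·∂y p + p) − β·∂x∂y p satisfies h u_{n,m} = (1/2)·(m + n + 1) · u_{n,m}; i.e., the polynomials u_{n,m} are weight vectors of the Cartan generator h with weight (m+n+1)/2. -/

import Mathlib

open MvPolynomial Finset

/-- The polynomial
`u_{n,m} = Σ_{k=0}^{min(n,m)} (−1)^k k! C(n,k) C(m,k) a^{(n−k)/2} b^k c^{(m−k)/2} x^{m−k} y^{n−k}`
in the variables `x = X 0`, `y = X 1`, where the powers of `a` and `c` are real powers. -/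
noncomputable def uPoly (a b c : ℝ) (n m : ℕ) : MvPolynomial (Fin 2) ℝ :=
  ∑ k ∈ range (min n m + 1),
    C ((-1 : ℝ) ^ k * (k.factorial : ℝ) * (n.choose k : ℝ) * (m.choose k : ℝ) *
        a ^ (((n - k : ℕ) : ℝ) / 2) * b ^ k * c ^ (((m - k : ℕ) : ℝ) / 2)) *
      X 0 ^ (m - k) * X 1 ^ (n - k)

lemma xd0 (r : ℝ) (p q : ℕ) :
    X 0 * pderiv (0 : Fin 2) (C r * X 0 ^ p * X 1 ^ q) = C (r * p) * X 0 ^ p * X 1 ^ q := by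
  cases p with
  | zero => simp [pderiv_mul, pderiv_pow, pderiv_X_of_ne]
  | succ p =>
    simp only [pderiv_mul, pderiv_pow, pderiv_X_self, pderiv_X_of_ne (show (1:Fin 2) ≠ 0 by decide), pderiv_C,
      map_mul, map_add, map_natCast, map_one]
    push_cast
    ring

lemma yd1 (r : ℝ) (p q : ℕ) :
    X 1 * pderiv (1 : Fin 2) (C r * X 0 ^ p * X 1 ^ q) = C (r * q) * X 0 ^ p * X 1 ^ q := by
  cases q with
  | zero => simp [pderiv_mul, pderiv_pow, pderiv_X_of_ne]
  | succ q =>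
    simp only [pderiv_mul, pderiv_pow, pderiv_X_self, pderiv_X_of_ne (show (0:Fin 2) ≠ 1 by decide), pderiv_C,
      map_mul, map_add, map_natCast, map_one]
    push_cast
    ring

lemma d01 (r : ℝ) (p q : ℕ) :
    pderiv (0 : Fin 2) (pderiv (1 : Fin 2) (C r * X 0 ^ p * X 1 ^ q)) =
      C (r * p * q) * X 0 ^ (p-1) * X 1 ^ (q-1) := by
  cases q with
  | zero => simp [pderiv_mul, pderiv_pow, pderiv_X_of_ne]
  | succ q =>
    cases p with
    | zero => simp [pderiv_mul, pderiv_pow, pderiv_X_of_ne, pderiv_X_self]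
    | succ p =>
      simp only [pderiv_mul, pderiv_pow, pderiv_X_self,
        pderiv_X_of_ne (show (0:Fin 2) ≠ 1 by decide),
        pderiv_X_of_ne (show (1:Fin 2) ≠ 0 by decide), pderiv_C,
        map_mul, map_add, map_natCast, map_one, Nat.add_sub_cancel]
      simp only [map_add, map_zero, pderiv_one, Derivation.map_natCast, Derivation.map_one_eq_zero]
      push_cast
      ring

noncomputable def tAux (a b c : ℝ) (n m k : ℕ) : MvPolynomial (Fin 2) ℝ :=
  C ((-1 : ℝ) ^ k * (k.factorial : ℝ) * (n.choose k : ℝ) * (m.choose k : ℝ) *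
      a ^ (((n - k : ℕ) : ℝ) / 2) * b ^ k * c ^ (((m - k : ℕ) : ℝ) / 2)) *
    X 0 ^ (m - k) * X 1 ^ (n - k)

noncomputable def gAux (a b c : ℝ) (n m k : ℕ) : MvPolynomial (Fin 2) ℝ :=
  (k : ℝ) • tAux a b c n m k

lemma keyLemma (a b c β : ℝ) (ha : 0 < a) (hc : 0 < c)
    (hβ : β = b / Real.sqrt (a * c)) (n m k : ℕ) (hkn : k ≤ n) (hkm : k ≤ m) :
    C (1 / 2 : ℝ) * (X 0 * pderiv 0 (tAux a b c n m k) + X 1 * pderiv 1 (tAux a b c n m k) +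
        tAux a b c n m k) - C β * pderiv 0 (pderiv 1 (tAux a b c n m k)) -
      C (((m + n + 1 : ℕ) : ℝ) / 2) * tAux a b c n m k =
    gAux a b c n m (k+1) - gAux a b c n m k := by
  unfold gAux tAux
  rw [xd0, yd1, d01]
  rw [show m - k - 1 = m - (k+1) from by omega, show n - k - 1 = n - (k+1) from by omega]
  simp only [← smul_eq_C_mul, smul_mul_assoc, smul_smul]
  match_scalars
  · rw [Nat.cast_sub hkn, Nat.cast_sub hkm]
    ring
  · rcases eq_or_lt_of_le hkn with rfl | hkn'
    · simp [Nat.choose_succ_self, Nat.sub_self]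
    rcases eq_or_lt_of_le hkm with rfl | hkm'
    · simp [Nat.choose_succ_self, Nat.sub_self]
    have h2 : (k:ℝ) + 1 ≠ 0 := by positivity
    have ha2 : a ^ (((n - k : ℕ):ℝ) / 2) = Real.sqrt a * a ^ (((n - (k+1) : ℕ):ℝ) / 2) := by
      rw [Real.sqrt_eq_rpow, ← Real.rpow_add ha]
      congr 1
      rw [Nat.cast_sub hkn, Nat.cast_sub (by omega : k+1 ≤ n)]
      push_cast; ring
    have hc2 : c ^ (((m - k : ℕ):ℝ) / 2) = Real.sqrt c * c ^ (((m - (k+1) : ℕ):ℝ) / 2) := by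
      rw [Real.sqrt_eq_rpow, ← Real.rpow_add hc]
      congr 1
      rw [Nat.cast_sub hkm, Nat.cast_sub (by omega : k+1 ≤ m)]
      push_cast; ring
    have hn1 : (n.choose (k+1) : ℝ) = n.choose k * ((n-k : ℕ):ℝ) / ((k:ℝ)+1) := by
      rw [eq_div_iff h2]
      exact_mod_cast Nat.choose_succ_right_eq n k
    have hm1 : (m.choose (k+1) : ℝ) = m.choose k * ((m-k : ℕ):ℝ) / ((k:ℝ)+1) := by
      rw [eq_div_iff h2]
      exact_mod_cast Nat.choose_succ_right_eq m k
    have hf : ((k+1).factorial : ℝ) = ((k:ℝ)+1) * k.factorial := by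
      exact_mod_cast Nat.factorial_succ k
    have hsa : Real.sqrt a ≠ 0 := (Real.sqrt_pos.mpr ha).ne'
    have hsc : Real.sqrt c ≠ 0 := (Real.sqrt_pos.mpr hc).ne'
    rw [hβ, Real.sqrt_mul ha.le, ha2, hc2, hn1, hm1, hf]
    field_simp
    ring

/-- The polynomials `u_{n,m}` are weight vectors of the Cartan generator
`h p = (1/2)·(x·∂x p + y·∂y p + p) − β·∂x∂y p` with weight `(m+n+1)/2`,
where `β = b/√(ac)`. -/
theorem uPoly_weight_vector (a b c β : ℝ) (ha : 0 < a) (hc : 0 < c)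
    (hβ : β = b / Real.sqrt (a * c)) (n m : ℕ) :
    C (1 / 2 : ℝ) * (X 0 * pderiv 0 (uPoly a b c n m) + X 1 * pderiv 1 (uPoly a b c n m) +
        uPoly a b c n m) - C β * pderiv 0 (pderiv 1 (uPoly a b c n m)) =
      C (((m + n + 1 : ℕ) : ℝ) / 2) * uPoly a b c n m := by
  rw [← sub_eq_zero]
  have hu : uPoly a b c n m = ∑ k ∈ range (min n m + 1), tAux a b c n m k := rfl
  rw [hu]
  simp only [map_sum, Finset.mul_sum, ← Finset.sum_add_distrib, ← Finset.sum_sub_distrib]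
  rw [Finset.sum_congr rfl (fun k hk => keyLemma a b c β ha hc hβ n m k
    (le_trans (Nat.lt_succ_iff.mp (Finset.mem_range.mp hk)) (min_le_left n m))
    (le_trans (Nat.lt_succ_iff.mp (Finset.mem_range.mp hk)) (min_le_right n m)))]
  rw [Finset.sum_range_sub (gAux a b c n m)]
  have h0 : gAux a b c n m 0 = 0 := by simp [gAux]
  have h1 : gAux a b c n m (min n m + 1) = 0 := by
    rcases le_total n m with h | h
    · have : n.choose (min n m + 1) = 0 := by
        rw [min_eq_left h]; exact Nat.choose_succ_self n
      simp [gAux, tAux, this]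
    · have : m.choose (min n m + 1) = 0 := by
        rw [min_eq_right h]; exact Nat.choose_succ_self m
      simp [gAux, tAux, this]
  rw [h0, h1, sub_zero]
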